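/- arXiv:2506.17684 — 3 statements merged into one kernel-verified Lean document; each statement's English description precedes it below -/
import Mathlib

section
/- For a prime p and integers a, b with 0 ≤ a < p, 1 ≤ b < p and gcd(b,p)=1, the Fermat quotient satisfies q_p(ap+b) ≡ q_p(b) - a·b^{-1} (mod p), where q_p(n) = (n^{p-1}-1)/p mod p and b^{-1} is the inverse of b modulo p. -/
lemma aux_binom (x y : ℤ) (m : ℕ) :
    ∃ K : ℤ, (x + y) ^ m = y ^ m + m * x * y ^ (m - 1) + x ^ 2 * K := by
  induction m with
  | zero => exact ⟨0, by simp⟩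
  | succ n ih =>
    obtain ⟨k, hk⟩ := ih
    have hy : y * (n * x * y ^ (n - 1)) = n * x * y ^ n := by
      cases n with
      | zero => simp
      | succ m => rw [Nat.succ_sub_one, pow_succ]; ring
    refine ⟨(n : ℤ) * y ^ (n - 1) + (x + y) * k, ?_⟩
    have h1 : (x + y) ^ (n + 1) = (x + y) * (x + y) ^ n := by ring
    rw [h1, hk, Nat.succ_sub_one]
    push_cast
    linear_combination hy

/-- Fermat quotient: `q_p(n) = (n^(p-1) - 1)/p` (exact integer division by
Fermat's little theorem when `gcd(n,p)=1`), considered modulo `p`. -/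
def fermatQuotient (p : ℕ) (n : ℤ) : ℤ := (n ^ (p - 1) - 1) / p

theorem fq_shift (p : ℕ) (hp : p.Prime) (a b c : ℤ)
    (ha0 : 0 ≤ a) (hap : a < p) (hb1 : 1 ≤ b) (hbp : b < p)
    (hgcd : Int.gcd b p = 1) (hc : Int.ModEq p (b * c) 1) :
    Int.ModEq p (fermatQuotient p (a * p + b))
      (fermatQuotient p b - a * c) := by
  have hp0 : (p : ℤ) ≠ 0 := by exact_mod_cast hp.pos.ne'
  have hcop : IsCoprime b (p : ℤ) := Int.isCoprime_iff_gcd_eq_one.mpr hgcd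
  have hfb : b ^ (p - 1) ≡ 1 [ZMOD (p : ℤ)] :=
    Int.ModEq.pow_card_sub_one_eq_one hp hcop
  have hnb : (a * p + b : ℤ) ≡ b [ZMOD (p : ℤ)] := by
    refine (Int.modEq_iff_dvd.mpr ?_)
    exact ⟨-a, by ring⟩
  have hfn : (a * p + b : ℤ) ^ (p - 1) ≡ 1 [ZMOD (p : ℤ)] :=
    (hnb.pow _).trans hfb
  obtain ⟨u, hu⟩ : (p : ℤ) ∣ (a * p + b) ^ (p - 1) - 1 :=
    Int.modEq_iff_dvd.mp hfn.symm
  obtain ⟨v, hv⟩ : (p : ℤ) ∣ b ^ (p - 1) - 1 :=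
    Int.modEq_iff_dvd.mp hfb.symm
  have hqn : fermatQuotient p (a * p + b) = u := by
    unfold fermatQuotient
    rw [hu, Int.mul_ediv_cancel_left _ hp0]
  have hqb : fermatQuotient p b = v := by
    unfold fermatQuotient
    rw [hv, Int.mul_ediv_cancel_left _ hp0]
  obtain ⟨K, hK⟩ := aux_binom (a * p) b (p - 1)
  have hcast : ((p - 1 : ℕ) : ℤ) = (p : ℤ) - 1 := by
    have := hp.one_le
    push_cast [Nat.cast_sub this]
    ring
  have hexp : p - 1 - 1 = p - 2 := by omega
  rw [hcast, hexp] at hK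
  have key : u = v + ((p : ℤ) - 1) * a * b ^ (p - 2) + p * (a ^ 2 * K) := by
    apply mul_left_cancel₀ hp0
    have h2 : (p : ℤ) * u + 1 = (a * p + b) ^ (p - 1) := by linarith [hu]
    have h3 : (p : ℤ) * v + 1 = b ^ (p - 1) := by linarith [hv]
    nlinarith [hK, h2, h3]
  -- b ^ (p - 2) ≡ c [ZMOD p]
  have hbp2 : b * b ^ (p - 2) = b ^ (p - 1) := by
    rw [← pow_succ']
    congr 1
    omega
  have hbc : b ^ (p - 2) ≡ c [ZMOD (p : ℤ)] := by
    have hmul : b * b ^ (p - 2) ≡ b * c [ZMOD (p : ℤ)] := by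
      calc b * b ^ (p - 2) = b ^ (p - 1) := hbp2
        _ ≡ 1 [ZMOD (p : ℤ)] := hfb
        _ ≡ b * c [ZMOD (p : ℤ)] := hc.symm
    have hd : (p : ℤ) ∣ b * (c - b ^ (p - 2)) := by
      have := Int.modEq_iff_dvd.mp hmul
      have h' : b * c - b * b ^ (p - 2) = b * (c - b ^ (p - 2)) := by ring
      rwa [h'] at this
    exact Int.modEq_iff_dvd.mpr (hcop.symm.dvd_of_dvd_mul_left hd)
  have hpm1 : ((p : ℤ) - 1) ≡ -1 [ZMOD (p : ℤ)] :=
    Int.modEq_iff_dvd.mpr ⟨-1, by ring⟩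
  have h1 : u ≡ v + ((p : ℤ) - 1) * a * b ^ (p - 2) [ZMOD (p : ℤ)] := by
    rw [key]
    exact (Int.modEq_iff_dvd.mpr ⟨-(a ^ 2 * K), by ring⟩)
  have h2 : v + ((p : ℤ) - 1) * a * b ^ (p - 2) ≡ v + (-1) * a * c [ZMOD (p : ℤ)] :=
    Int.ModEq.add_left v (((hpm1.mul (Int.ModEq.refl a)).mul hbc))
  rw [hqn, hqb]
  calc u ≡ v + ((p : ℤ) - 1) * a * b ^ (p - 2) [ZMOD (p : ℤ)] := h1
    _ ≡ v + (-1) * a * c [ZMOD (p : ℤ)] := h2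
    _ = v - a * c := by ring
end

section
/- For a prime p ≥ 3 and integers a, b with 0 ≤ a ≤ p-1, 1 ≤ b ≤ p-1, gcd(b,p)=1, one has q_p(ap+b) ≡ q_p((p-1-a)p + (p-b)) (mod p), i.e. the entry A_{a,b} of the Fermat quotient matrix equals A_{p-1-a, p-b}. -/
theorem fq_symmetry (p : ℕ) (hp : p.Prime) (hp3 : 3 ≤ p) (a b : ℤ)
    (ha0 : 0 ≤ a) (hap : a ≤ (p : ℤ) - 1) (hb1 : 1 ≤ b) (hbp : b ≤ (p : ℤ) - 1)
    (hgcd : Int.gcd b p = 1) :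
    Int.ModEq p (fermatQuotient p (a * p + b))
      (fermatQuotient p (((p : ℤ) - 1 - a) * p + ((p : ℤ) - b))) := by
  haveI := Fact.mk hp
  set P : ℤ := (p : ℤ) with hP
  have hp0 : (0:ℤ) < P := by positivity
  have hPne : P ≠ 0 := ne_of_gt hp0
  set m : ℤ := a * P + b with hm
  have hrw : (P - 1 - a) * P + (P - b) = P ^ 2 - m := by ring
  -- p does not divide m
  have hcop : IsCoprime b P := by
    rw [Int.isCoprime_iff_gcd_eq_one]; exact hgcd
  have hpm : ¬ (P ∣ m) := by
    intro h
    have hb : P ∣ b := by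
      have : P ∣ m - a * P := h.sub ⟨a, mul_comm a P⟩
      simpa [hm] using this
    have : IsUnit P := hcop.isUnit_of_dvd' hb dvd_rfl
    rw [Int.isUnit_iff] at this
    omega
  have hpm' : ¬ (P ∣ P ^ 2 - m) := by
    intro h
    have h2 : P ∣ P ^ 2 := dvd_pow_self P (by norm_num)
    exact hpm (by have := h2.sub h; simpa using this)
  -- Fermat's little theorem : P ∣ n^(p-1) - 1 for n not divisible by p
  have flt : ∀ n : ℤ, ¬ (P ∣ n) → P ∣ n ^ (p - 1) - 1 := by
    intro n hn
    have hne : (n : ZMod p) ≠ 0 := by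
      rw [Ne, ZMod.intCast_zmod_eq_zero_iff_dvd]; exact hn
    have h1 : (n : ZMod p) ^ (p - 1) = 1 := ZMod.pow_card_sub_one_eq_one hne
    have : ((n ^ (p - 1) - 1 : ℤ) : ZMod p) = 0 := by push_cast [h1]; ring
    exact (ZMod.intCast_zmod_eq_zero_iff_dvd _ p).mp this
  obtain ⟨k, hk⟩ := flt m hpm
  obtain ⟨k', hk'⟩ := flt (P ^ 2 - m) hpm'
  -- (P^2 - m)^(p-1) ≡ m^(p-1) mod P^2
  have heven : Even (p - 1) := by
    have : Odd p := hp.odd_of_ne_two (by omega)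
    exact Nat.Odd.sub_odd this odd_one
  have hmod2 : P ^ 2 ∣ (P ^ 2 - m) ^ (p - 1) - m ^ (p - 1) := by
    have h1 : (P ^ 2 - m) ≡ -m [ZMOD P ^ 2] := by
      have : P ^ 2 ∣ -m - (P ^ 2 - m) := ⟨-1, by ring⟩
      exact Int.modEq_iff_dvd.mpr this
    have h2 : (P ^ 2 - m) ^ (p - 1) ≡ (-m) ^ (p - 1) [ZMOD P ^ 2] := h1.pow _
    rw [heven.neg_pow m] at h2
    exact (Int.ModEq.dvd h2.symm)
  -- hence P ∣ k' - k
  have hdvd : P ∣ k' - k := by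
    have hPP : P * P ∣ P * (k' - k) := by
      have heq : (P ^ 2 - m) ^ (p - 1) - m ^ (p - 1) = P * (k' - k) := by
        have e1 : (P ^ 2 - m) ^ (p - 1) = P * k' + 1 := by omega
        have e2 : m ^ (p - 1) = P * k + 1 := by omega
        rw [e1, e2]; ring
      rw [← heq, ← pow_two]
      exact hmod2
    exact (mul_dvd_mul_iff_left hPne).mp hPP
  -- conclude
  have hq1 : fermatQuotient p m = k := by
    unfold fermatQuotient
    rw [← hP, hk, Int.mul_ediv_cancel_left _ hPne]
  have hq2 : fermatQuotient p (P ^ 2 - m) = k' := by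
    unfold fermatQuotient
    rw [← hP, hk', Int.mul_ediv_cancel_left _ hPne]
  rw [hrw, hq1, hq2]
  exact Int.modEq_iff_dvd.mpr hdvd
end

section
/- For a prime p, integers a, b, s with gcd(b,p)=1, the Fermat quotient satisfies q_p((a+s)p+b) ≡ q_p(ap+b) - s·b^{-1} (mod p), where b^{-1} denotes the inverse of b mod p. -/
lemma pow_shift (y t q : ℤ) : ∀ k : ℕ, ∃ u : ℤ,
    (y + q * t) ^ (k + 1) = y ^ (k + 1) + (k + 1) * y ^ k * q * t + q ^ 2 * u := by
  intro k
  induction k with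
  | zero => exact ⟨0, by ring⟩
  | succ k ih =>
    obtain ⟨u, hu⟩ := ih
    refine ⟨y * u + (k + 1) * y ^ k * t ^ 2 + q * t * u, ?_⟩
    have : (y + q * t) ^ (k + 1 + 1) = (y + q * t) * (y + q * t) ^ (k + 1) := by ring
    rw [this, hu]
    push_cast
    ring

theorem fq_row_shift (p : ℕ) (hp : p.Prime) (a b s c : ℤ)
    (hgcd : Int.gcd b p = 1) (hc : Int.ModEq p (b * c) 1) :
    Int.ModEq p (fermatQuotient p ((a + s) * p + b))
      (fermatQuotient p (a * p + b) - s * c) := by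
  have hp2 : 2 ≤ p := hp.two_le
  have hpk : p - 1 = (p - 2) + 1 := by omega
  have hp0 : (p : ℤ) ≠ 0 := by exact_mod_cast hp.ne_zero
  set n : ℤ := a * p + b with hn
  set m : ℤ := (a + s) * p + b with hm
  -- coprimality of n, m with p
  have hnb : n ≡ b [ZMOD p] := Int.ModEq.symm (Int.modEq_iff_dvd.2 ⟨a, by rw [hn]; ring⟩)
  have hmb : m ≡ b [ZMOD p] := Int.ModEq.symm (Int.modEq_iff_dvd.2 ⟨a + s, by rw [hm]; ring⟩)
  have hcopb : IsCoprime b (p : ℤ) := Int.isCoprime_iff_gcd_eq_one.2 hgcd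
  have hcopn : IsCoprime n (p : ℤ) := by
    obtain ⟨x, y, hxy⟩ := hcopb
    exact ⟨x, y - x * a, by rw [hn]; linear_combination hxy⟩
  have hcopm : IsCoprime m (p : ℤ) := by
    obtain ⟨x, y, hxy⟩ := hcopb
    exact ⟨x, y - x * (a + s), by rw [hm]; linear_combination hxy⟩
  -- Fermat's little theorem
  have hFn : n ^ (p - 1) ≡ 1 [ZMOD p] := Int.ModEq.pow_card_sub_one_eq_one hp hcopn
  have hFm : m ^ (p - 1) ≡ 1 [ZMOD p] := Int.ModEq.pow_card_sub_one_eq_one hp hcopm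
  have hdvdn : (p : ℤ) ∣ n ^ (p - 1) - 1 := Int.ModEq.dvd hFn.symm
  have hdvdm : (p : ℤ) ∣ m ^ (p - 1) - 1 := Int.ModEq.dvd hFm.symm
  obtain ⟨A, hA⟩ := hdvdm
  obtain ⟨B, hB⟩ := hdvdn
  have hqm : fermatQuotient p m = A := by
    rw [fermatQuotient, hA, Int.mul_ediv_cancel_left _ hp0]
  have hqn : fermatQuotient p n = B := by
    rw [fermatQuotient, hB, Int.mul_ediv_cancel_left _ hp0]
  -- binomial expansion mod p^2
  obtain ⟨u, hu⟩ := pow_shift n s p (p - 2)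
  have hmn : m = n + p * s := by rw [hm, hn]; ring
  have hkey : (p : ℤ) * (A - B) = (p : ℤ) * (((p : ℤ) - 2 + 1) * n ^ (p - 2) * s + p * u) := by
    have h1 : m ^ (p - 1) - n ^ (p - 1) = (p : ℤ) * A - (p : ℤ) * B := by
      rw [← hA, ← hB]; ring
    have h2 : m ^ (p - 1) - n ^ (p - 1)
        = ((p - 2 : ℕ) + 1 : ℤ) * n ^ (p - 2) * p * s + p ^ 2 * u := by
      rw [hmn, hpk, hu]; ring
    have hcast : ((p - 2 : ℕ) : ℤ) = (p : ℤ) - 2 := by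
      push_cast [Nat.cast_sub hp2]; ring
    rw [hcast] at h2
    linarith [h1, h2]
  have hAB : A - B = ((p : ℤ) - 1) * n ^ (p - 2) * s + p * u :=
    by have := mul_left_cancel₀ hp0 hkey; linarith [this]
  -- n ^ (p-2) ≡ c mod p
  have hn2 : n ^ (p - 2) ≡ c [ZMOD p] := by
    have h1 : n ^ (p - 2) * (b * c) ≡ n ^ (p - 2) * 1 [ZMOD p] := Int.ModEq.mul_left _ hc
    have h2 : n ^ (p - 2) * b ≡ b ^ (p - 2) * b [ZMOD p] :=
      Int.ModEq.mul_right _ (hnb.pow _)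
    have h3 : b ^ (p - 2) * b = b ^ (p - 1) := by rw [hpk, pow_succ]
    have h4 : b ^ (p - 1) ≡ 1 [ZMOD p] := Int.ModEq.pow_card_sub_one_eq_one hp hcopb
    calc n ^ (p - 2) = n ^ (p - 2) * 1 := by ring
      _ ≡ n ^ (p - 2) * (b * c) [ZMOD p] := h1.symm
      _ = (n ^ (p - 2) * b) * c := by ring
      _ ≡ (b ^ (p - 2) * b) * c [ZMOD p] := Int.ModEq.mul_right _ h2
      _ = b ^ (p - 1) * c := by rw [h3]
      _ ≡ 1 * c [ZMOD p] := Int.ModEq.mul_right _ h4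
      _ = c := by ring
  -- finish
  rw [hqm, hqn]
  have hfin : A - B ≡ -(s * c) [ZMOD p] := by
    rw [hAB]
    calc ((p : ℤ) - 1) * n ^ (p - 2) * s + p * u
        ≡ ((p : ℤ) - 1) * c * s + p * u [ZMOD p] := by
          exact Int.ModEq.add_right _ (Int.ModEq.mul_right _ (Int.ModEq.mul_left _ hn2))
      _ ≡ -(s * c) [ZMOD p] := by
          have : ((p : ℤ) - 1) * c * s + p * u - (-(s * c)) = p * (c * s + u) := by ring
          exact Int.modEq_iff_dvd.2 ⟨-(c * s + u), by linarith [this]⟩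
  have := hfin.add_right B
  calc A = A - B + B := by ring
    _ ≡ -(s * c) + B [ZMOD p] := this
    _ = B - s * c := by ring
end
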